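/- (Polyphase anchoring equivariance.) Fix t ≥ 1 and the phase norms N as above. Suppose a volume X has a unique phase k* = (p*,q*,r*) maximizing N_k(X) over all phases. Then for any integers g = (g₁,g₂,g₃): (i) T_g X has a unique norm-maximizing phase, namely k̂ = ((p*+g₁) mod s₁, (q*+g₂) mod s₂, (r*+g₃) mod s₃); and (ii) defining the anchoring operator 𝒫(Y) = T_{−k̂(Y)} Y, where k̂(Y) is the unique norm-maximizing phase of Y viewed as a translation vector, there exists a translation g′ = (g′₁,g′₂,g′₃) such that 𝒫(T_g X) = T_{g′} 𝒫(X). -/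
import Mathlib


noncomputable section

open scoped BigOperators

/-- The well-defined map `ZMod n → ZMod (n*s)` induced by `a ↦ s*a + p`. -/
def phaseEmb (n s : ℕ) (p : ℤ) (i : ZMod n) : ZMod (n * s) :=
  (s : ZMod (n * s)) * (i.val : ZMod (n * s)) + (p : ZMod (n * s))

/-- Circular translation of a volume by an integer vector `g`:
`(T_g X)(i,j,k) = X(i-g₁, j-g₂, k-g₃)`. -/
def Tvol {D H W : ℕ} (g : ℤ × ℤ × ℤ) (X : ZMod D × ZMod H × ZMod W → ℝ) :
    ZMod D × ZMod H × ZMod W → ℝ :=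
  fun v => X (v.1 - (g.1 : ZMod D), v.2.1 - (g.2.1 : ZMod H), v.2.2 - (g.2.2 : ZMod W))

/-- Polyphase component `Ψ(X)_{(p,q,r)}(i,j,k) = X(s₁·i+p, s₂·j+q, s₃·k+r)`. -/
def Psi (s₁ s₂ s₃ n₁ n₂ n₃ : ℕ) (p q r : ℤ)
    (X : ZMod (n₁ * s₁) × ZMod (n₂ * s₂) × ZMod (n₃ * s₃) → ℝ) :
    ZMod n₁ × ZMod n₂ × ZMod n₃ → ℝ :=
  fun v => X (phaseEmb n₁ s₁ p v.1, phaseEmb n₂ s₂ q v.2.1, phaseEmb n₃ s₃ r v.2.2)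

/-- Phase norm `N_{(p,q,r)}(X) = (Σ_{(i,j,k)} |Ψ(X)_{(p,q,r)}(i,j,k)|^t)^{1/t}`,
for a phase indexed by `Fin s₁ × Fin s₂ × Fin s₃`. -/
noncomputable def phaseNorm (s₁ s₂ s₃ n₁ n₂ n₃ : ℕ) [NeZero n₁] [NeZero n₂] [NeZero n₃]
    (t : ℝ) (k : Fin s₁ × Fin s₂ × Fin s₃)
    (X : ZMod (n₁ * s₁) × ZMod (n₂ * s₂) × ZMod (n₃ * s₃) → ℝ) : ℝ :=
  (∑ v : ZMod n₁ × ZMod n₂ × ZMod n₃,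
      |Psi s₁ s₂ s₃ n₁ n₂ n₃ (k.1 : ℤ) (k.2.1 : ℤ) (k.2.2 : ℤ) X v| ^ t) ^ (1 / t)

/-- Shift of a phase component by an integer, modulo the patch size. -/
def phAdd {s : ℕ} [NeZero s] (p : Fin s) (g : ℤ) : Fin s :=
  ⟨(((p : ℤ) + g) % (s : ℤ)).toNat, by
    have hs : (0 : ℤ) < (s : ℤ) := by
      exact_mod_cast Nat.pos_of_ne_zero (NeZero.ne s)
    have h1 := Int.emod_nonneg ((p : ℤ) + g) hs.ne'
    have h2 := Int.emod_lt_of_pos ((p : ℤ) + g) hs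
    omega⟩

/-- Componentwise shift of a phase triple by an integer vector. -/
def phAdd3 {s₁ s₂ s₃ : ℕ} [NeZero s₁] [NeZero s₂] [NeZero s₃]
    (k : Fin s₁ × Fin s₂ × Fin s₃) (g : ℤ × ℤ × ℤ) : Fin s₁ × Fin s₂ × Fin s₃ :=
  (phAdd k.1 g.1, phAdd k.2.1 g.2.1, phAdd k.2.2 g.2.2)

lemma mul_val_cast (n s : ℕ) [NeZero n] (a : ZMod n) (z : ℤ) (h : (z : ZMod n) = a) :
    (s : ZMod (n*s)) * ((a.val : ℤ) : ZMod (n*s)) = (s : ZMod (n*s)) * (z : ZMod (n*s)) := by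
  have h0 : (((a.val : ℤ) - z : ℤ) : ZMod n) = 0 := by
    push_cast
    simp [h, ZMod.natCast_val, ZMod.cast_id]
  have hdvd : (n : ℤ) ∣ ((a.val : ℤ) - z) := (ZMod.intCast_zmod_eq_zero_iff_dvd _ n).mp h0
  obtain ⟨c, hc⟩ := hdvd
  have h2 : ((s:ℤ) * (a.val:ℤ) - (s:ℤ)*z : ℤ) = ((n*s : ℕ) : ℤ) * c := by
    push_cast; rw [← mul_sub, hc]; ring
  have h3 : (((s:ℤ) * (a.val:ℤ) - (s:ℤ)*z : ℤ) : ZMod (n*s)) = 0 := by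
    rw [h2, Int.cast_mul]; push_cast; simp [← Nat.cast_mul]
  push_cast at h3
  push_cast
  linear_combination h3

lemma emb_shift (n s : ℕ) [NeZero n] [NeZero s] (p g : ℤ) (i : ZMod n) :
    phaseEmb n s p i - (g : ZMod (n*s))
      = phaseEmb n s ((p - g) % s) (i + (((p - g) / s : ℤ) : ZMod n)) := by
  unfold phaseEmb
  have key := mul_val_cast n s (i + (((p - g) / s : ℤ) : ZMod n))
      ((i.val : ℤ) + (p - g) / s) (by push_cast; simp [ZMod.natCast_val, ZMod.cast_id])
  have hq : (p - g : ℤ) = s * ((p-g)/s) + (p-g) % s := (Int.mul_ediv_add_emod _ _).symm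
  have : ((p - g : ℤ) : ZMod (n*s)) = ((s * ((p-g)/s) + (p-g) % s : ℤ) : ZMod (n*s)) := by
    rw [← hq]
  push_cast at this key ⊢
  linear_combination this - key

lemma phAdd_coe {s : ℕ} [NeZero s] (p : Fin s) (g : ℤ) :
    ((phAdd p g : Fin s) : ℤ) = ((p : ℤ) + g) % (s : ℤ) := by
  have hs : (0 : ℤ) < (s : ℤ) := by exact_mod_cast Nat.pos_of_ne_zero (NeZero.ne s)
  simp only [phAdd]
  exact Int.toNat_of_nonneg (Int.emod_nonneg _ hs.ne')

lemma phAdd_phAdd (s : ℕ) [NeZero s] (p : Fin s) (g h : ℤ) :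
    phAdd (phAdd p g) h = phAdd p (g + h) := by
  have hs : (0 : ℤ) < (s : ℤ) := by exact_mod_cast Nat.pos_of_ne_zero (NeZero.ne s)
  apply Fin.ext
  have : (((phAdd (phAdd p g) h : Fin s) : ℤ)) = (((phAdd p (g+h) : Fin s) : ℤ)) := by
    rw [phAdd_coe, phAdd_coe, phAdd_coe, Int.emod_add_emod, add_assoc]
  exact_mod_cast this

lemma phAdd_cancel (s : ℕ) [NeZero s] (p : Fin s) (g : ℤ) :
    phAdd (phAdd p g) (-g) = p := by
  have hs : (0 : ℤ) < (s : ℤ) := by exact_mod_cast Nat.pos_of_ne_zero (NeZero.ne s)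
  rw [phAdd_phAdd, add_neg_cancel]
  apply Fin.ext
  have : ((phAdd p 0 : Fin s) : ℤ) = ((p : Fin s) : ℤ) := by
    rw [phAdd_coe, add_zero, Int.emod_eq_of_lt (by positivity) (by exact_mod_cast p.isLt)]
  exact_mod_cast this

lemma phaseNorm_Tvol (s₁ s₂ s₃ n₁ n₂ n₃ : ℕ)
    [NeZero s₁] [NeZero s₂] [NeZero s₃] [NeZero n₁] [NeZero n₂] [NeZero n₃]
    (t : ℝ) (k : Fin s₁ × Fin s₂ × Fin s₃)
    (X : ZMod (n₁ * s₁) × ZMod (n₂ * s₂) × ZMod (n₃ * s₃) → ℝ) (g₁ g₂ g₃ : ℤ) :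
    phaseNorm s₁ s₂ s₃ n₁ n₂ n₃ t k (Tvol (g₁, g₂, g₃) X)
      = phaseNorm s₁ s₂ s₃ n₁ n₂ n₃ t (phAdd3 k (-g₁, -g₂, -g₃)) X := by
  unfold phaseNorm
  congr 1
  set m : ZMod n₁ × ZMod n₂ × ZMod n₃ :=
    (((((k.1:ℤ) - g₁) / s₁ : ℤ) : ZMod n₁), ((((k.2.1:ℤ) - g₂) / s₂ : ℤ) : ZMod n₂),
      ((((k.2.2:ℤ) - g₃) / s₃ : ℤ) : ZMod n₃)) with hm
  apply Fintype.sum_equiv (Equiv.addRight m)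
  intro v
  congr 1
  simp only [Psi, Tvol, Equiv.coe_addRight, Prod.fst_add, Prod.snd_add]
  have h1 : phaseEmb n₁ s₁ (k.1 : ℤ) v.1 - (g₁ : ZMod (n₁*s₁))
      = phaseEmb n₁ s₁ ((phAdd3 k (-g₁, -g₂, -g₃)).1 : ℤ) (v.1 + m.1) := by
    rw [emb_shift n₁ s₁ (k.1 : ℤ) g₁ v.1]
    have : ((phAdd3 k (-g₁, -g₂, -g₃)).1 : ℤ) = ((k.1:ℤ) - g₁) % s₁ := by
      simp [phAdd3, phAdd_coe, sub_eq_add_neg]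
    rw [this]
  have h2 : phaseEmb n₂ s₂ (k.2.1 : ℤ) v.2.1 - (g₂ : ZMod (n₂*s₂))
      = phaseEmb n₂ s₂ ((phAdd3 k (-g₁, -g₂, -g₃)).2.1 : ℤ) (v.2.1 + m.2.1) := by
    rw [emb_shift n₂ s₂ (k.2.1 : ℤ) g₂ v.2.1]
    have : ((phAdd3 k (-g₁, -g₂, -g₃)).2.1 : ℤ) = ((k.2.1:ℤ) - g₂) % s₂ := by
      simp [phAdd3, phAdd_coe, sub_eq_add_neg]
    rw [this]
  have h3 : phaseEmb n₃ s₃ (k.2.2 : ℤ) v.2.2 - (g₃ : ZMod (n₃*s₃))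
      = phaseEmb n₃ s₃ ((phAdd3 k (-g₁, -g₂, -g₃)).2.2 : ℤ) (v.2.2 + m.2.2) := by
    rw [emb_shift n₃ s₃ (k.2.2 : ℤ) g₃ v.2.2]
    have : ((phAdd3 k (-g₁, -g₂, -g₃)).2.2 : ℤ) = ((k.2.2:ℤ) - g₃) % s₃ := by
      simp [phAdd3, phAdd_coe, sub_eq_add_neg]
    rw [this]
  exact congrArg (fun a => |X a|) (by rw [Prod.mk.injEq, Prod.mk.injEq]; exact ⟨h1, h2, h3⟩)

lemma phAdd_zero (s : ℕ) [NeZero s] (p : Fin s) : phAdd p 0 = p := by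
  have hs : (0 : ℤ) < (s : ℤ) := by exact_mod_cast Nat.pos_of_ne_zero (NeZero.ne s)
  apply Fin.ext
  have : ((phAdd p 0 : Fin s) : ℤ) = ((p : Fin s) : ℤ) := by
    rw [phAdd_coe, add_zero, Int.emod_eq_of_lt (by positivity) (by exact_mod_cast p.isLt)]
  exact_mod_cast this

lemma phAdd3_phAdd3 {s₁ s₂ s₃ : ℕ} [NeZero s₁] [NeZero s₂] [NeZero s₃]
    (k : Fin s₁ × Fin s₂ × Fin s₃) (g h : ℤ × ℤ × ℤ) :
    phAdd3 (phAdd3 k g) h = phAdd3 k (g.1 + h.1, g.2.1 + h.2.1, g.2.2 + h.2.2) := by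
  simp [phAdd3, phAdd_phAdd]

lemma Tvol_Tvol {D H W : ℕ} (a b : ℤ × ℤ × ℤ) (X : ZMod D × ZMod H × ZMod W → ℝ) :
    Tvol a (Tvol b X) = Tvol (b.1 + a.1, b.2.1 + a.2.1, b.2.2 + a.2.2) X := by
  funext v
  simp only [Tvol]
  congr 2 <;> push_cast <;> ring


/-- **Polyphase anchoring equivariance.**  If `X` has a unique phase `k*`
maximizing the phase norm, then for any translation `g`: (i) `T_g X` has a unique
norm-maximizing phase, namely `k* ⊕ g`; (ii) with the anchoring operator
`𝒫(Y) = T_{−k̂(Y)} Y` (where `k̂(Y)` is the unique norm-maximizing phase of `Y`),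
there is a translation `g'` with `𝒫(T_g X) = T_{g'} 𝒫(X)`. -/
theorem polyphase_anchoring_equivariance
    (s₁ s₂ s₃ n₁ n₂ n₃ : ℕ)
    [NeZero s₁] [NeZero s₂] [NeZero s₃] [NeZero n₁] [NeZero n₂] [NeZero n₃]
    (t : ℝ) (ht : 1 ≤ t)
    (X : ZMod (n₁ * s₁) × ZMod (n₂ * s₂) × ZMod (n₃ * s₃) → ℝ)
    (kstar : Fin s₁ × Fin s₂ × Fin s₃)
    (hmax : ∀ k : Fin s₁ × Fin s₂ × Fin s₃, k ≠ kstar →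
      phaseNorm s₁ s₂ s₃ n₁ n₂ n₃ t k X < phaseNorm s₁ s₂ s₃ n₁ n₂ n₃ t kstar X)
    (g₁ g₂ g₃ : ℤ) :
    (∀ k : Fin s₁ × Fin s₂ × Fin s₃, k ≠ phAdd3 kstar (g₁, g₂, g₃) →
      phaseNorm s₁ s₂ s₃ n₁ n₂ n₃ t k (Tvol (g₁, g₂, g₃) X)
        < phaseNorm s₁ s₂ s₃ n₁ n₂ n₃ t (phAdd3 kstar (g₁, g₂, g₃))
            (Tvol (g₁, g₂, g₃) X))
    ∧ ∃ g' : ℤ × ℤ × ℤ,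
        Tvol (-((phAdd3 kstar (g₁, g₂, g₃)).1 : ℤ),
              -((phAdd3 kstar (g₁, g₂, g₃)).2.1 : ℤ),
              -((phAdd3 kstar (g₁, g₂, g₃)).2.2 : ℤ))
          (Tvol (g₁, g₂, g₃) X)
        = Tvol g'
            (Tvol (-(kstar.1 : ℤ), -(kstar.2.1 : ℤ), -(kstar.2.2 : ℤ)) X) := by
  constructor
  · intro k hk
    rw [phaseNorm_Tvol, phaseNorm_Tvol]
    have hkstar : phAdd3 (phAdd3 kstar (g₁, g₂, g₃)) (-g₁, -g₂, -g₃) = kstar := by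
      simp [phAdd3, phAdd_cancel]
    rw [hkstar]
    apply hmax
    intro h
    apply hk
    have := congrArg (fun j => phAdd3 j (g₁, g₂, g₃)) h
    simpa [phAdd3_phAdd3, phAdd3, phAdd_phAdd, phAdd_zero, Prod.ext_iff] using this
  · refine ⟨(g₁ + (kstar.1 : ℤ) - ((phAdd3 kstar (g₁, g₂, g₃)).1 : ℤ),
      g₂ + (kstar.2.1 : ℤ) - ((phAdd3 kstar (g₁, g₂, g₃)).2.1 : ℤ),
      g₃ + (kstar.2.2 : ℤ) - ((phAdd3 kstar (g₁, g₂, g₃)).2.2 : ℤ)), ?_⟩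
    rw [Tvol_Tvol, Tvol_Tvol]
    congr 2 <;> ring
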